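/- If λ is an eigenvalue of the transmission graph Laplacian Δ^P, then its imaginary part satisfies |Im(λ)| ≤ (1/2) · max over directed edges e⃗ of ‖P(e⃗)* − P(op(e⃗))‖. -/

import Mathlib

open Finset Matrix

/-- A finite graph presented by its set of directed edges: `op` reverses a
directed edge, `i` and `t` give the initial and terminal vertices. -/
structure DGraph (V : Type) where
  E : Type
  [fE : Fintype E]
  [dE : DecidableEq E]
  op : E → E
  op_op : ∀ e, op (op e) = e
  i : E → V
  t : E → V
  i_op : ∀ e, i (op e) = t e
  t_op : ∀ e, t (op e) = i e

attribute [instance] DGraph.fE DGraph.dE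

/-- The degree of a vertex: the number of directed edges terminating there. -/
def DGraph.deg {V : Type} [DecidableEq V] (G : DGraph V) (w : V) : ℕ :=
  (Finset.univ.filter (fun e => G.t e = w)).card

/-- A transmission system on a graph, presented in assembled ("big matrix")
form: the data banks `ℂ^{n(v)}` at the vertices are the fibers of `π : B → V`,
and the transmission matrix `P e` of a directed edge `e` is supported on the
block (fiber of `t e`) × (fiber of `i e`). -/
def IsTransmission {V B : Type} (G : DGraph V) (π : B → V)
    (P : G.E → Matrix B B ℂ) : Prop :=
  ∀ e b b', P e b b' ≠ 0 → π b = G.t e ∧ π b' = G.i e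

/-- The transmission graph Laplacian
`(Δ^P f)(w) = f(w) - Σ_{e : t(e)=w} (d_w d_{i(e)})^{-1/2} P(e) f(i(e))`. -/
noncomputable def transLap {V B : Type} [DecidableEq V] [Fintype B]
    (G : DGraph V) (π : B → V) (P : G.E → Matrix B B ℂ)
    (f : B → ℂ) : B → ℂ := fun b =>
  f b - ∑ e ∈ Finset.univ.filter (fun e => G.t e = π b),
    (Real.sqrt ((G.deg (π b) : ℝ) * (G.deg (G.i e) : ℝ)) : ℂ)⁻¹ *
      ∑ b', P e b b' * f b'

/-! ### Auxiliary definitions and lemmas -/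

/-- The sesquilinear pairing `⟨f, M f⟩`. -/
noncomputable def tSum {B : Type} [Fintype B] (f : B → ℂ) (M : Matrix B B ℂ) : ℂ :=
  ∑ b, ∑ b', (starRingEnd ℂ) (f b) * (M b b' * f b')

/-- The edge weight `(d_{t e} d_{i e})^{-1/2}`. -/
noncomputable def cw {V : Type} [DecidableEq V] (G : DGraph V) (e : G.E) : ℝ :=
  (Real.sqrt ((G.deg (G.t e) : ℝ) * (G.deg (G.i e) : ℝ)))⁻¹

/-- The restriction of `f` to the fiber of `v`, as a Euclidean vector. -/
noncomputable def gv {V B : Type} [DecidableEq V] [Fintype B] (π : B → V)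
    (f : B → ℂ) (v : V) : EuclideanSpace ℂ B :=
  (WithLp.equiv 2 (B → ℂ)).symm (fun b => if π b = v then f b else 0)

lemma cw_nonneg {V : Type} [DecidableEq V] (G : DGraph V) (e : G.E) : 0 ≤ cw G e :=
  inv_nonneg.2 (Real.sqrt_nonneg _)

lemma cw_op {V : Type} [DecidableEq V] (G : DGraph V) (e : G.E) : cw G (G.op e) = cw G e := by
  simp only [cw, G.t_op, G.i_op]
  rw [mul_comm]

lemma sum_op {V : Type} (G : DGraph V) (φ : G.E → ℂ) :
    ∑ e, φ (G.op e) = ∑ e, φ e :=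
  Equiv.sum_comp ⟨G.op, G.op, G.op_op, G.op_op⟩ φ

lemma conj_tSum {B : Type} [Fintype B] (f : B → ℂ) (M : Matrix B B ℂ) :
    (starRingEnd ℂ) (tSum f M) = tSum f Mᴴ := by
  simp only [tSum, map_sum, _root_.map_mul, Complex.conj_conj,
    Matrix.conjTranspose_apply, Complex.star_def]
  rw [Finset.sum_comm]
  exact Finset.sum_congr rfl fun b _ => Finset.sum_congr rfl fun b' _ => by ring

lemma tSum_sub {B : Type} [Fintype B] (f : B → ℂ) (M M' : Matrix B B ℂ) :
    tSum f (M - M') = tSum f M - tSum f M' := by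
  simp only [tSum, Matrix.sub_apply, ← Finset.sum_sub_distrib]
  refine Finset.sum_congr rfl fun b _ => Finset.sum_congr rfl fun b' _ => by ring

set_option synthInstance.maxHeartbeats 1000000 in
/-- Block-supported matrices pair only through the corresponding fiber restrictions. -/
lemma tSum_bound {V B : Type} [DecidableEq V] [Fintype B] [DecidableEq B]
    (π : B → V) (f : B → ℂ) (A : Matrix B B ℂ) (v w : V)
    (hA : ∀ b b', A b b' ≠ 0 → π b = v ∧ π b' = w) :
    ‖tSum f A‖ ≤ ‖Matrix.toEuclideanCLM (𝕜 := ℂ) A‖ * (‖gv π f v‖ * ‖gv π f w‖) := by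
  have key : tSum f A = inner (𝕜 := ℂ) (gv π f v) (Matrix.toEuclideanCLM (𝕜 := ℂ) A (gv π f w)) := by
    rw [gv, gv, WithLp.equiv_symm_apply, Matrix.toEuclideanCLM_toLp]
    simp only [PiLp.inner_apply, RCLike.inner_apply, PiLp.toLp_apply,
      Matrix.mulVec, dotProduct]
    rw [tSum]
    have hpt : ∀ b b', (starRingEnd ℂ) (f b) * (A b b' * f b')
        = (starRingEnd ℂ) (if π b = v then f b else 0) *
          (A b b' * if π b' = w then f b' else 0) := by
      intro b b'
      by_cases h : A b b' = 0
      · simp [h]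
      · obtain ⟨h1, h2⟩ := hA b b' h
        simp [h1, h2]
    exact Finset.sum_congr rfl fun b _ =>
      ((Finset.sum_congr rfl fun b' _ => hpt b b').trans (Finset.mul_sum _ _ _).symm).trans (mul_comm _ _)
  rw [key]
  calc ‖inner (𝕜 := ℂ) (gv π f v) (Matrix.toEuclideanCLM (𝕜 := ℂ) A (gv π f w))‖
      ≤ ‖gv π f v‖ * ‖Matrix.toEuclideanCLM (𝕜 := ℂ) A (gv π f w)‖ := norm_inner_le_norm _ _
    _ ≤ ‖gv π f v‖ * (‖Matrix.toEuclideanCLM (𝕜 := ℂ) A‖ * ‖gv π f w‖) := by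
        refine mul_le_mul_of_nonneg_left (ContinuousLinearMap.le_opNorm _ _) (norm_nonneg _)
    _ = ‖Matrix.toEuclideanCLM (𝕜 := ℂ) A‖ * (‖gv π f v‖ * ‖gv π f w‖) := by ring

lemma gv_norm_sq {V B : Type} [DecidableEq V] [Fintype B] (π : B → V)
    (f : B → ℂ) (v : V) :
    ‖gv π f v‖ ^ 2 = ∑ b, (if π b = v then ‖f b‖ ^ 2 else 0) := by
  rw [gv, EuclideanSpace.norm_eq, Real.sq_sqrt (by positivity)]
  refine Finset.sum_congr rfl fun b _ => ?_
  simp only [WithLp.equiv_symm_apply, PiLp.toLp_apply]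
  by_cases h : π b = v <;> simp [h]

set_option synthInstance.maxHeartbeats 1000000 in
lemma norm_toEuclideanCLM_conjTranspose {B : Type} [Fintype B] [DecidableEq B]
    (A : Matrix B B ℂ) :
    ‖Matrix.toEuclideanCLM (𝕜 := ℂ) Aᴴ‖ = ‖Matrix.toEuclideanCLM (𝕜 := ℂ) A‖ := by
  rw [show Aᴴ = star A from rfl, map_star, ContinuousLinearMap.star_eq_adjoint,
    ContinuousLinearMap.adjoint.norm_map]

/-- If λ is an eigenvalue of the transmission graph Laplacian Δ^P then
|Im λ| ≤ (1/2) · max over directed edges of ‖P(e)* - P(op(e))‖. -/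
theorem transLap_eigenvalue_im_le {V B : Type} [Fintype V] [DecidableEq V]
    [Fintype B] [DecidableEq B]
    (G : DGraph V) (π : B → V) (P : G.E → Matrix B B ℂ)
    (hP : IsTransmission G π P) (hdeg : ∀ v, 0 < G.deg v)
    (lam : ℂ) (f : B → ℂ) (hf : f ≠ 0)
    (heig : transLap G π P f = lam • f) :
    |lam.im| ≤ (1/2) * ⨆ e : G.E, ‖Matrix.toEuclideanCLM (𝕜 := ℂ) ((P e)ᴴ - P (G.op e))‖ := by
  classical
  set N : G.E → ℝ := fun e => ‖Matrix.toEuclideanCLM (𝕜 := ℂ) ((P e)ᴴ - P (G.op e))‖ with hN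
  set K : ℝ := ⨆ e : G.E, N e with hK
  set A : G.E → Matrix B B ℂ := fun e => P e - (P (G.op e))ᴴ with hA
  set F : ℝ := ∑ b, ‖f b‖ ^ 2 with hF
  have hN0 : ∀ e, 0 ≤ N e := fun e => norm_nonneg _
  have hK0 : 0 ≤ K := Real.iSup_nonneg hN0
  have hNK : ∀ e, N e ≤ K := fun e => le_ciSup (Set.Finite.bddAbove (Set.finite_range N)) e
  -- support of A e
  have hAsupp : ∀ e b b', A e b b' ≠ 0 → π b = G.t e ∧ π b' = G.i e := by
    intro e b b' h
    have h' : P e b b' ≠ 0 ∨ P (G.op e) b' b ≠ 0 := by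
      by_contra hc
      push_neg at hc
      simp [hA, Matrix.sub_apply, Matrix.conjTranspose_apply, hc.1, hc.2] at h
    rcases h' with h1 | h1
    · exact hP e b b' h1
    · obtain ⟨h2, h3⟩ := hP _ _ _ h1
      rw [G.t_op] at h2; rw [G.i_op] at h3
      exact ⟨h3, h2⟩
  have hPz : ∀ e b b', π b ≠ G.t e → P e b b' = 0 := by
    intro e b b' h
    by_contra h0
    exact h (hP e b b' h0).1
  -- F is positive
  have hFpos : 0 < F := by
    obtain ⟨b, hb⟩ := Function.ne_iff.1 hf
    have h1 : (0:ℝ) < ‖f b‖ ^ 2 := pow_pos (norm_pos_iff.2 hb) 2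
    have h2 : ‖f b‖ ^ 2 ≤ ∑ b', ‖f b'‖ ^ 2 :=
      Finset.single_le_sum (f := fun b => ‖f b‖ ^ 2) (fun b _ => sq_nonneg _)
        (Finset.mem_univ b)
    rw [hF]
    exact lt_of_lt_of_le h1 h2
  -- the eigenvalue equation paired against f
  have hzsq : ∀ z : ℂ, (starRingEnd ℂ) z * z = (‖z‖ : ℂ) ^ 2 := by
    intro z
    rw [mul_comm, Complex.mul_conj, Complex.normSq_eq_norm_sq]
    norm_cast
  have hFc : ∑ b, (starRingEnd ℂ) (f b) * f b = (F : ℂ) := by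
    rw [hF]
    push_cast
    exact Finset.sum_congr rfl fun b _ => hzsq (f b)
  have hswap : ∑ b, (starRingEnd ℂ) (f b) *
      (∑ e ∈ Finset.univ.filter (fun e => G.t e = π b),
        (Real.sqrt ((G.deg (π b) : ℝ) * (G.deg (G.i e) : ℝ)) : ℂ)⁻¹ *
          ∑ b', P e b b' * f b')
      = ∑ e, (cw G e : ℂ) * tSum f (P e) := by
    have step1 : ∀ b, (starRingEnd ℂ) (f b) *
        (∑ e ∈ Finset.univ.filter (fun e => G.t e = π b),
          (Real.sqrt ((G.deg (π b) : ℝ) * (G.deg (G.i e) : ℝ)) : ℂ)⁻¹ *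
            ∑ b', P e b b' * f b')
        = ∑ e, (if G.t e = π b then (starRingEnd ℂ) (f b) *
            ((Real.sqrt ((G.deg (π b) : ℝ) * (G.deg (G.i e) : ℝ)) : ℂ)⁻¹ *
              ∑ b', P e b b' * f b') else 0) := by
      intro b
      rw [Finset.mul_sum, Finset.sum_filter]
    rw [Finset.sum_congr rfl fun b _ => step1 b, Finset.sum_comm]
    refine Finset.sum_congr rfl fun e _ => ?_
    rw [tSum, Finset.mul_sum]
    refine Finset.sum_congr rfl fun b _ => ?_
    by_cases h : G.t e = π b
    · rw [if_pos h, ← h]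
      rw [Finset.mul_sum, Finset.mul_sum, Finset.mul_sum]
      refine Finset.sum_congr rfl fun b' _ => ?_
      rw [cw, Complex.ofReal_inv]
      ring
    · rw [if_neg h]
      have hz : ∀ b', (starRingEnd ℂ) (f b) * (P e b b' * f b') = 0 := by
        intro b'
        rw [hPz e b b' (fun hh => h hh.symm)]
        ring
      rw [Finset.sum_congr rfl fun b' _ => hz b', Finset.sum_const_zero, mul_zero]
  have heq : ∀ b, f b - (∑ e ∈ Finset.univ.filter (fun e => G.t e = π b),
      (Real.sqrt ((G.deg (π b) : ℝ) * (G.deg (G.i e) : ℝ)) : ℂ)⁻¹ *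
        ∑ b', P e b b' * f b') = lam * f b := by
    intro b
    have := congrFun heig b
    simpa [transLap, Pi.smul_apply, smul_eq_mul] using this
  have hWkey : lam * (F : ℂ) = (F : ℂ) - ∑ e, (cw G e : ℂ) * tSum f (P e) := by
    calc lam * (F : ℂ) = ∑ b, (starRingEnd ℂ) (f b) * (lam * f b) := by
          rw [← hFc, Finset.mul_sum]
          exact Finset.sum_congr rfl fun b _ => by ring
      _ = ∑ b, ((starRingEnd ℂ) (f b) * f b - (starRingEnd ℂ) (f b) *
            (∑ e ∈ Finset.univ.filter (fun e => G.t e = π b),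
              (Real.sqrt ((G.deg (π b) : ℝ) * (G.deg (G.i e) : ℝ)) : ℂ)⁻¹ *
                ∑ b', P e b b' * f b')) := by
          refine Finset.sum_congr rfl fun b _ => ?_
          rw [← heq b]
          ring
      _ = (F : ℂ) - ∑ e, (cw G e : ℂ) * tSum f (P e) := by
          rw [Finset.sum_sub_distrib, hFc, hswap]
  set W : ℂ := ∑ e, (cw G e : ℂ) * tSum f (P e) with hW
  -- conjugate of W
  have hconjW : (starRingEnd ℂ) W = ∑ e, (cw G e : ℂ) * tSum f ((P (G.op e))ᴴ) := by
    rw [hW, map_sum]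
    have : ∀ e, (starRingEnd ℂ) ((cw G e : ℂ) * tSum f (P e))
        = (cw G e : ℂ) * tSum f ((P e)ᴴ) := by
      intro e
      rw [_root_.map_mul, conj_tSum, Complex.conj_ofReal]
    rw [Finset.sum_congr rfl fun e _ => this e]
    rw [← sum_op G (fun e => (cw G e : ℂ) * tSum f ((P e)ᴴ))]
    refine Finset.sum_congr rfl fun e _ => ?_
    rw [cw_op]
  -- imaginary part identity
  have hWim : lam.im * F = -W.im := by
    have h1 : (lam * (F : ℂ)).im = lam.im * F := by
      simp [Complex.mul_im]
    have h2 : ((F : ℂ) - W).im = -W.im := by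
      simp
    rw [← h1, hWkey, h2]
  have hsplit : (2 : ℝ) * W.im = (∑ e, (cw G e : ℂ) * tSum f (A e)).im := by
    have : ∑ e, (cw G e : ℂ) * tSum f (A e) = W - (starRingEnd ℂ) W := by
      rw [hconjW, hW, ← Finset.sum_sub_distrib]
      refine Finset.sum_congr rfl fun e _ => ?_
      rw [hA, tSum_sub]
      ring
    rw [this]
    simp [Complex.sub_im, Complex.conj_im]
    ring
  -- bound each term
  have hterm : ∀ e, ‖(cw G e : ℂ) * tSum f (A e)‖
      ≤ cw G e * (N e * (‖gv π f (G.t e)‖ * ‖gv π f (G.i e)‖)) := by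
    intro e
    rw [norm_mul, Complex.norm_real, Real.norm_eq_abs, abs_of_nonneg (cw_nonneg G e)]
    refine mul_le_mul_of_nonneg_left ?_ (cw_nonneg G e)
    have hnorm : ‖Matrix.toEuclideanCLM (𝕜 := ℂ) (A e)‖ = N e := by
      have h5 : A e = ((P e)ᴴ - P (G.op e))ᴴ := by
        simp only [hA]
        rw [Matrix.conjTranspose_sub, Matrix.conjTranspose_conjTranspose]
      rw [h5, norm_toEuclideanCLM_conjTranspose]
    calc ‖tSum f (A e)‖ ≤ ‖Matrix.toEuclideanCLM (𝕜 := ℂ) (A e)‖ *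
          (‖gv π f (G.t e)‖ * ‖gv π f (G.i e)‖) :=
        tSum_bound π f (A e) (G.t e) (G.i e) (hAsupp e)
      _ = N e * (‖gv π f (G.t e)‖ * ‖gv π f (G.i e)‖) := by rw [hnorm]
  -- the weighted Cauchy-Schwarz sum bound
  have hgsum : ∀ v : V, (G.deg v : ℝ) * (‖gv π f v‖ ^ 2 / (G.deg v : ℝ)) = ‖gv π f v‖ ^ 2 := by
    intro v
    rw [mul_div_cancel₀]
    exact Nat.cast_ne_zero.2 (hdeg v).ne'
  have hfib : ∑ e, ‖gv π f (G.t e)‖ ^ 2 / (G.deg (G.t e) : ℝ) = F := by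
    rw [← Finset.sum_fiberwise Finset.univ (fun e => G.t e)
      (fun e => ‖gv π f (G.t e)‖ ^ 2 / (G.deg (G.t e) : ℝ))]
    have inner : ∀ v : V, ∑ e ∈ Finset.univ.filter (fun e => G.t e = v),
        ‖gv π f (G.t e)‖ ^ 2 / (G.deg (G.t e) : ℝ) = ‖gv π f v‖ ^ 2 := by
      intro v
      rw [Finset.sum_congr rfl (fun e he => by
        rw [(Finset.mem_filter.1 he).2])]
      rw [Finset.sum_const, nsmul_eq_mul]
      exact hgsum v
    rw [Finset.sum_congr rfl fun v _ => inner v]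
    rw [hF]
    have : ∀ v, ‖gv π f v‖ ^ 2 = ∑ b, (if π b = v then ‖f b‖ ^ 2 else 0) :=
      gv_norm_sq π f
    rw [Finset.sum_congr rfl fun v _ => this v, Finset.sum_comm]
    refine Finset.sum_congr rfl fun b _ => ?_
    simp
  have hfibi : ∑ e, ‖gv π f (G.i e)‖ ^ 2 / (G.deg (G.i e) : ℝ) = F := by
    have := Equiv.sum_comp (⟨G.op, G.op, G.op_op, G.op_op⟩ : Equiv.Perm G.E)
      (fun e => ‖gv π f (G.i e)‖ ^ 2 / (G.deg (G.i e) : ℝ))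
    rw [← this]
    simp only [Equiv.coe_fn_mk, G.i_op]
    exact hfib
  have hCS : ∀ e, cw G e * (‖gv π f (G.t e)‖ * ‖gv π f (G.i e)‖)
      ≤ (‖gv π f (G.t e)‖ ^ 2 / (G.deg (G.t e) : ℝ)
        + ‖gv π f (G.i e)‖ ^ 2 / (G.deg (G.i e) : ℝ)) / 2 := by
    intro e
    set a := ‖gv π f (G.t e)‖
    set b := ‖gv π f (G.i e)‖
    set dt := (G.deg (G.t e) : ℝ) with hdt
    set di := (G.deg (G.i e) : ℝ) with hdi
    have hdt0 : 0 < dt := by rw [hdt]; exact_mod_cast hdeg _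
    have hdi0 : 0 < di := by rw [hdi]; exact_mod_cast hdeg _
    have hcw : cw G e = (Real.sqrt dt)⁻¹ * (Real.sqrt di)⁻¹ := by
      rw [cw, Real.sqrt_mul (le_of_lt hdt0), mul_inv]
    rw [hcw]
    have key : ((Real.sqrt dt)⁻¹ * a) * ((Real.sqrt di)⁻¹ * b)
        ≤ (((Real.sqrt dt)⁻¹ * a) ^ 2 + ((Real.sqrt di)⁻¹ * b) ^ 2) / 2 := by
      nlinarith [sq_nonneg ((Real.sqrt dt)⁻¹ * a - (Real.sqrt di)⁻¹ * b)]
    have h1 : ((Real.sqrt dt)⁻¹ * a) ^ 2 = a ^ 2 / dt := by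
      rw [mul_pow, inv_pow, Real.sq_sqrt (le_of_lt hdt0)]
      ring
    have h2 : ((Real.sqrt di)⁻¹ * b) ^ 2 = b ^ 2 / di := by
      rw [mul_pow, inv_pow, Real.sq_sqrt (le_of_lt hdi0)]
      ring
    calc (Real.sqrt dt)⁻¹ * (Real.sqrt di)⁻¹ * (a * b)
        = ((Real.sqrt dt)⁻¹ * a) * ((Real.sqrt di)⁻¹ * b) := by ring
      _ ≤ (((Real.sqrt dt)⁻¹ * a) ^ 2 + ((Real.sqrt di)⁻¹ * b) ^ 2) / 2 := key
      _ = (a ^ 2 / dt + b ^ 2 / di) / 2 := by rw [h1, h2]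
  have hsumCS : ∑ e, cw G e * (‖gv π f (G.t e)‖ * ‖gv π f (G.i e)‖) ≤ F := by
    calc ∑ e, cw G e * (‖gv π f (G.t e)‖ * ‖gv π f (G.i e)‖)
        ≤ ∑ e, (‖gv π f (G.t e)‖ ^ 2 / (G.deg (G.t e) : ℝ)
          + ‖gv π f (G.i e)‖ ^ 2 / (G.deg (G.i e) : ℝ)) / 2 :=
        Finset.sum_le_sum fun e _ => hCS e
      _ = (F + F) / 2 := by
          rw [← Finset.sum_div, Finset.sum_add_distrib, hfib, hfibi]
      _ = F := by ring
  -- final assembly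
  have main : |lam.im| * F ≤ (1/2 * K) * F := by
    have h0 : |lam.im| * F = |W.im| := by
      rw [← abs_of_nonneg (le_of_lt hFpos), ← abs_mul, hWim, abs_neg]
    rw [h0]
    have h1 : |W.im| = |(∑ e, (cw G e : ℂ) * tSum f (A e)).im| / 2 := by
      rw [← hsplit, abs_mul, abs_of_nonneg (by norm_num : (0:ℝ) ≤ 2)]
      ring
    rw [h1]
    have h2 : |(∑ e, (cw G e : ℂ) * tSum f (A e)).im|
        ≤ ∑ e, cw G e * (N e * (‖gv π f (G.t e)‖ * ‖gv π f (G.i e)‖)) := by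
      calc |(∑ e, (cw G e : ℂ) * tSum f (A e)).im|
          ≤ ‖∑ e, (cw G e : ℂ) * tSum f (A e)‖ := Complex.abs_im_le_norm _
        _ ≤ ∑ e, ‖(cw G e : ℂ) * tSum f (A e)‖ := norm_sum_le _ _
        _ ≤ ∑ e, cw G e * (N e * (‖gv π f (G.t e)‖ * ‖gv π f (G.i e)‖)) :=
            Finset.sum_le_sum fun e _ => hterm e
    have h3 : ∑ e, cw G e * (N e * (‖gv π f (G.t e)‖ * ‖gv π f (G.i e)‖))
        ≤ K * ∑ e, cw G e * (‖gv π f (G.t e)‖ * ‖gv π f (G.i e)‖) := by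
      rw [Finset.mul_sum]
      refine Finset.sum_le_sum fun e _ => ?_
      have : cw G e * (N e * (‖gv π f (G.t e)‖ * ‖gv π f (G.i e)‖))
          = N e * (cw G e * (‖gv π f (G.t e)‖ * ‖gv π f (G.i e)‖)) := by ring
      rw [this]
      refine mul_le_mul (hNK e) le_rfl ?_ hK0
      exact mul_nonneg (cw_nonneg G e) (mul_nonneg (norm_nonneg _) (norm_nonneg _))
    have h4 : K * ∑ e, cw G e * (‖gv π f (G.t e)‖ * ‖gv π f (G.i e)‖) ≤ K * F :=
      mul_le_mul_of_nonneg_left hsumCS hK0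
    calc |(∑ e, (cw G e : ℂ) * tSum f (A e)).im| / 2
        ≤ (K * F) / 2 := by
          apply div_le_div_of_nonneg_right ?_ (by norm_num)
          · exact le_trans h2 (le_trans h3 h4)
      _ = (1/2 * K) * F := by ring
  exact (mul_le_mul_iff_of_pos_right hFpos).mp main
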